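/- Let k be a positive integer and set C(k) = N₁,₁,₂(k) − 8·L₂(k) − 8·L₁,₂(k) − 16·L₁,₃(k) − 16·L₂(k/2), where L₂(k/2) is interpreted as 0 when k is odd. If k = m² for some odd positive integer m, then 16·L₁,₁,₂(k) = C(k) − 4; if k = 2m² for some positive integer m, then 16·L₁,₁,₂(k) = C(k) − 6; if k = 3m² for some positive integer m, then 16·L₁,₁,₂(k) = C(k) − 8; if k = 4m² for some positive integer m, then 16·L₁,₁,₂(k) = C(k) − 12. -/
import Mathlib


noncomputable def N112 (k : ℕ) : ℕ := {t : ℤ × ℤ × ℤ | t.1 ^ 2 + t.2.1 ^ 2 + 2 * t.2.2 ^ 2 = (k : ℤ)}.ncard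

noncomputable def L112 (k : ℕ) : ℕ := {t : ℕ × ℕ × ℕ | 0 < t.1 ∧ 0 < t.2.2 ∧ t.1 < t.2.1 ∧ t.1 ≠ t.2.2 ∧ t.2.1 ≠ t.2.2 ∧ t.1 ^ 2 + t.2.1 ^ 2 + 2 * t.2.2 ^ 2 = k}.ncard

noncomputable def L2 (k : ℕ) : ℕ := {p : ℕ × ℕ | 0 < p.1 ∧ p.1 < p.2 ∧ p.1 ^ 2 + p.2 ^ 2 = k}.ncard

noncomputable def L12 (k : ℕ) : ℕ := {p : ℕ × ℕ | 0 < p.1 ∧ 0 < p.2 ∧ p.1 ≠ p.2 ∧ p.1 ^ 2 + 2 * p.2 ^ 2 = k}.ncard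

noncomputable def L13 (k : ℕ) : ℕ := {p : ℕ × ℕ | 0 < p.1 ∧ 0 < p.2 ∧ p.1 ≠ p.2 ∧ p.1 ^ 2 + 3 * p.2 ^ 2 = k}.ncard

noncomputable def L2half (k : ℕ) : ℕ := if k % 2 = 0 then L2 (k / 2) else 0

noncomputable def C (k : ℕ) : ℤ := N112 k - 8 * L2 k - 8 * L12 k - 16 * L13 k - 16 * L2half k

/-! ### Auxiliary infrastructure -/

section Aux

open Set

/-- sign helper -/
def eb (b : Bool) : ℤ := cond b 1 (-1)

lemma eb_sq (b : Bool) : eb b ^ 2 = 1 := by cases b <;> simp [eb]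

lemma eb_natAbs (b : Bool) (a : ℕ) : (eb b * (a:ℤ)).natAbs = a := by cases b <;> simp [eb]

lemma eb_mul_sq (b : Bool) (a : ℕ) : (eb b * (a:ℤ))^2 = (a:ℤ)^2 := by rw [mul_pow, eb_sq, one_mul]

lemma eb_ne_zero (b : Bool) {a : ℕ} (ha : 0 < a) : eb b * (a:ℤ) ≠ 0 := by
  cases b <;> simp [eb] <;> omega

lemma eb_recover (x : ℤ) (hx : x ≠ 0) : eb (decide (0 < x)) * (x.natAbs : ℤ) = x := by
  by_cases h : 0 < x
  · rw [decide_eq_true h]; show 1 * (x.natAbs:ℤ) = x; omega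
  · rw [decide_eq_false h]; show -1 * (x.natAbs:ℤ) = x; omega

lemma eb_inj {b b' : Bool} {a a' : ℕ} (ha : 0 < a) (ha' : 0 < a')
    (h : eb b * (a:ℤ) = eb b' * (a':ℤ)) : b = b' ∧ a = a' := by
  cases b <;> cases b' <;> simp only [eb, Bool.cond_true, Bool.cond_false] at h <;>
    first
    | exact ⟨rfl, by omega⟩
    | (exfalso; omega)

/-- irrationality-type lemma -/
lemma sq_aux {p c x y : ℕ} (hp : p.Prime) (hc : ¬ p ∣ c) (hc0 : 0 < c)
    (h : c * x^2 = p * y^2) : y = 0 := by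
  by_contra hy
  have hx : x ≠ 0 := by
    rintro rfl
    have h0 : p * y ^ 2 = 0 := by omega
    rcases Nat.mul_eq_zero.mp h0 with h' | h'
    · exact hp.ne_zero h'
    · exact hy (by simpa using pow_eq_zero_iff (n := 2) (by norm_num) |>.mp h')
  have h1 : (c * x^2).factorization p = (p * y^2).factorization p := by rw [h]
  rw [Nat.factorization_mul (by omega) (pow_ne_zero 2 hx),
      Nat.factorization_mul hp.ne_zero (pow_ne_zero 2 hy),
      Nat.factorization_pow, Nat.factorization_pow] at h1
  simp only [Finsupp.add_apply, Finsupp.smul_apply, smul_eq_mul] at h1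
  rw [Nat.Prime.factorization_self hp] at h1
  have h2 : c.factorization p = 0 := Nat.factorization_eq_zero_of_not_dvd hc
  omega

lemma nat_sq_inj {a b : ℕ} (h : a^2 = b^2) : a = b :=
  Nat.pow_left_injective two_ne_zero h

lemma abs_le_of_sq_le {x n : ℤ} (h : x^2 ≤ n) : -n ≤ x ∧ x ≤ n := by
  constructor
  · rcases le_or_gt 0 x with h'|h' <;> nlinarith
  · rcases le_or_gt 0 x with h'|h' <;> nlinarith

/-- solution set -/
def sol (k : ℕ) : Set (ℤ × ℤ × ℤ) := {t | t.1 ^ 2 + t.2.1 ^ 2 + 2 * t.2.2 ^ 2 = (k : ℤ)}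

lemma sol_finite (k : ℕ) : (sol k).Finite := by
  have hsub : sol k ⊆ Set.Icc (-(k:ℤ), -(k:ℤ), -(k:ℤ)) ((k:ℤ), (k:ℤ), (k:ℤ)) := by
    rintro ⟨x, y, z⟩ h
    simp only [sol, Set.mem_setOf_eq] at h
    have hx := abs_le_of_sq_le (show x^2 ≤ (k:ℤ) by nlinarith [sq_nonneg y, sq_nonneg z])
    have hy := abs_le_of_sq_le (show y^2 ≤ (k:ℤ) by nlinarith [sq_nonneg x, sq_nonneg z])
    have hz := abs_le_of_sq_le (show z^2 ≤ (k:ℤ) by nlinarith [sq_nonneg x, sq_nonneg y])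
    simp only [Set.mem_Icc, Prod.le_def]
    exact ⟨⟨hx.1, hy.1, hz.1⟩, ⟨hx.2, hy.2, hz.2⟩⟩
  exact (Set.finite_Icc _ _).subset hsub

lemma nat_eq_of_int {x y z : ℤ} {k : ℕ} (h : x^2+y^2+2*z^2 = (k:ℤ)) :
    x.natAbs^2 + y.natAbs^2 + 2*z.natAbs^2 = k := by
  have h2 : ((x.natAbs^2 + y.natAbs^2 + 2*z.natAbs^2 : ℕ) : ℤ) = (k:ℤ) := by
    simp only [Nat.cast_add, Nat.cast_mul, Nat.cast_pow, Nat.cast_ofNat, Int.natAbs_sq]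
    exact h
  exact_mod_cast h2

lemma int_eq_of_nat {a b c k : ℕ} (h : a^2 + b^2 + 2*c^2 = k) :
    (a:ℤ)^2 + (b:ℤ)^2 + 2*(c:ℤ)^2 = (k:ℤ) := by exact_mod_cast h

/-- classification of solutions -/
def cls (t : ℤ × ℤ × ℤ) : Fin 10 :=
  if t.2.2 = 0 then
    if t.1 = 0 ∨ t.2.1 = 0 then 0
    else if t.1.natAbs = t.2.1.natAbs then 1
    else 2
  else
    if t.1 = 0 ∧ t.2.1 = 0 then 3
    else if t.1 = 0 ∨ t.2.1 = 0 then
      if t.1.natAbs + t.2.1.natAbs = t.2.2.natAbs then 4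
      else 5
    else
      if t.1.natAbs = t.2.1.natAbs then
        if t.1.natAbs = t.2.2.natAbs then 6
        else 7
      else if t.1.natAbs = t.2.2.natAbs ∨ t.2.1.natAbs = t.2.2.natAbs then 8
      else 9

lemma cls_eq_zero {x y z : ℤ} : cls (x,y,z) = 0 ↔ z = 0 ∧ (x = 0 ∨ y = 0) := by
  unfold cls; split_ifs <;> simp_all

lemma cls_eq_one {x y z : ℤ} : cls (x,y,z) = 1 ↔ z = 0 ∧ x ≠ 0 ∧ y ≠ 0 ∧ x.natAbs = y.natAbs := by
  unfold cls; split_ifs <;> simp_all <;> tauto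

lemma cls_eq_two {x y z : ℤ} : cls (x,y,z) = 2 ↔ z = 0 ∧ x ≠ 0 ∧ y ≠ 0 ∧ x.natAbs ≠ y.natAbs := by
  unfold cls; split_ifs <;> simp_all <;> tauto

lemma cls_eq_three {x y z : ℤ} : cls (x,y,z) = 3 ↔ z ≠ 0 ∧ x = 0 ∧ y = 0 := by
  unfold cls; split_ifs <;> simp_all

lemma cls_eq_four {x y z : ℤ} : cls (x,y,z) = 4 ↔
    z ≠ 0 ∧ ((x = 0 ∧ y ≠ 0 ∧ y.natAbs = z.natAbs) ∨ (y = 0 ∧ x ≠ 0 ∧ x.natAbs = z.natAbs)) := by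
  unfold cls; split_ifs <;> simp_all <;> omega

lemma cls_eq_five {x y z : ℤ} : cls (x,y,z) = 5 ↔
    z ≠ 0 ∧ ((x = 0 ∧ y ≠ 0 ∧ y.natAbs ≠ z.natAbs) ∨ (y = 0 ∧ x ≠ 0 ∧ x.natAbs ≠ z.natAbs)) := by
  unfold cls; split_ifs <;> simp_all <;> omega

lemma cls_eq_six {x y z : ℤ} : cls (x,y,z) = 6 ↔
    z ≠ 0 ∧ x ≠ 0 ∧ y ≠ 0 ∧ x.natAbs = y.natAbs ∧ x.natAbs = z.natAbs := by
  unfold cls; split_ifs <;> simp_all <;> tauto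

lemma cls_eq_seven {x y z : ℤ} : cls (x,y,z) = 7 ↔
    z ≠ 0 ∧ x ≠ 0 ∧ y ≠ 0 ∧ x.natAbs = y.natAbs ∧ x.natAbs ≠ z.natAbs := by
  unfold cls; split_ifs <;> simp_all <;> tauto

lemma cls_eq_eight {x y z : ℤ} : cls (x,y,z) = 8 ↔
    z ≠ 0 ∧ x ≠ 0 ∧ y ≠ 0 ∧ x.natAbs ≠ y.natAbs ∧
      (x.natAbs = z.natAbs ∨ y.natAbs = z.natAbs) := by
  unfold cls; split_ifs <;> simp_all <;> tauto

lemma cls_eq_nine {x y z : ℤ} : cls (x,y,z) = 9 ↔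
    z ≠ 0 ∧ x ≠ 0 ∧ y ≠ 0 ∧ x.natAbs ≠ y.natAbs ∧
      x.natAbs ≠ z.natAbs ∧ y.natAbs ≠ z.natAbs := by
  unfold cls; split_ifs <;> simp_all <;> tauto

/-- fibers of the classification -/
def fib (k : ℕ) (i : Fin 10) : Set (ℤ × ℤ × ℤ) := {t ∈ sol k | cls t = i}

lemma fib_finite (k : ℕ) (i : Fin 10) : (fib k i).Finite :=
  (sol_finite k).subset (fun _ ht => ht.1)

lemma N112_eq_sum (k : ℕ) : (sol k).ncard = ∑ i : Fin 10, (fib k i).ncard := by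
  classical
  have hfin := sol_finite k
  have h1 : hfin.toFinset.card = ∑ i : Fin 10, (hfin.toFinset.filter (fun t => cls t = i)).card :=
    Finset.card_eq_sum_card_fiberwise (fun t _ => Finset.mem_univ _)
  have h2 : ∀ i : Fin 10, fib k i = ↑(hfin.toFinset.filter (fun t => cls t = i)) := by
    intro i
    ext t
    simp [fib, Set.Finite.mem_toFinset, Sep.sep]
  rw [Set.ncard_eq_toFinset_card _ hfin, h1]
  exact Finset.sum_congr rfl (fun i _ => by rw [h2 i, Set.ncard_coe_finset])

/-- generic orbit-counting lemma -/
lemma count_lemma {σ α : Type*} [Fintype σ] {β : Type*} (f : σ → α → β) (P : Set α) (T : Set β)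
    (h1 : ∀ s a, a ∈ P → f s a ∈ T)
    (h2 : ∀ t ∈ T, ∃ s a, a ∈ P ∧ f s a = t)
    (h3 : ∀ s a s' a', a ∈ P → a' ∈ P → f s a = f s' a' → s = s' ∧ a = a') :
    T.ncard = Fintype.card σ * P.ncard := by
  have himg : (fun p : σ × α => f p.1 p.2) '' ((Set.univ : Set σ) ×ˢ P) = T := by
    ext t
    constructor
    · rintro ⟨⟨s, a⟩, ⟨-, ha⟩, rfl⟩
      exact h1 s a ha
    · intro ht
      obtain ⟨s, a, ha, hfa⟩ := h2 t ht
      exact ⟨⟨s, a⟩, ⟨trivial, ha⟩, hfa⟩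
  have hinj : Set.InjOn (fun p : σ × α => f p.1 p.2) ((Set.univ : Set σ) ×ˢ P) := by
    rintro ⟨s, a⟩ ⟨-, ha⟩ ⟨s', a'⟩ ⟨-, ha'⟩ h
    obtain ⟨h4, h5⟩ := h3 s a s' a' ha ha' h
    exact Prod.ext h4 h5
  rw [← himg, Set.ncard_image_of_injOn hinj]
  rw [← Nat.card_coe_set_eq, Nat.card_congr (Equiv.Set.prod _ _), Nat.card_prod]
  rw [Nat.card_coe_set_eq, Nat.card_coe_set_eq, Set.ncard_univ, Nat.card_eq_fintype_card]

/-! parameter sets -/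

def P112 (k : ℕ) : Set (ℕ × ℕ × ℕ) :=
  {t | 0 < t.1 ∧ 0 < t.2.2 ∧ t.1 < t.2.1 ∧ t.1 ≠ t.2.2 ∧ t.2.1 ≠ t.2.2 ∧
    t.1 ^ 2 + t.2.1 ^ 2 + 2 * t.2.2 ^ 2 = k}

def P2 (k : ℕ) : Set (ℕ × ℕ) := {p | 0 < p.1 ∧ p.1 < p.2 ∧ p.1 ^ 2 + p.2 ^ 2 = k}

def P12 (k : ℕ) : Set (ℕ × ℕ) := {p | 0 < p.1 ∧ 0 < p.2 ∧ p.1 ≠ p.2 ∧ p.1 ^ 2 + 2 * p.2 ^ 2 = k}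

def P13 (k : ℕ) : Set (ℕ × ℕ) := {p | 0 < p.1 ∧ 0 < p.2 ∧ p.1 ≠ p.2 ∧ p.1 ^ 2 + 3 * p.2 ^ 2 = k}

lemma L112_eq (k : ℕ) : L112 k = (P112 k).ncard := rfl
lemma L2_eq (k : ℕ) : L2 k = (P2 k).ncard := rfl
lemma L12_eq (k : ℕ) : L12 k = (P12 k).ncard := rfl
lemma L13_eq (k : ℕ) : L13 k = (P13 k).ncard := rfl
lemma N112_eq (k : ℕ) : N112 k = (sol k).ncard := rfl

end Aux

section Counts

open Set

lemma count9 (k : ℕ) : (fib k 9).ncard = 16 * (P112 k).ncard := by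
  have h := count_lemma
    (fun (s : Bool × Bool × Bool × Bool) (a : ℕ × ℕ × ℕ) =>
      (eb s.1 * (cond s.2.2.2 a.1 a.2.1 : ℕ), eb s.2.1 * (cond s.2.2.2 a.2.1 a.1 : ℕ),
        eb s.2.2.1 * (a.2.2 : ℕ)))
    (P112 k) (fib k 9) ?_ ?_ ?_
  · rw [h]; norm_num
  · rintro ⟨s, t, u, w⟩ ⟨a, b, c⟩ ⟨ha, hc, hab, hac, hbc, heq⟩
    dsimp only at ha hc hab hac hbc heq ⊢
    have hb : 0 < b := lt_trans ha hab
    constructor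
    · show _ = (k:ℤ)
      cases w <;>
        simp only [Bool.cond_true, Bool.cond_false, eb_mul_sq] <;>
        · have := int_eq_of_nat heq; push_cast at this ⊢; linarith
    · show cls _ = 9
      rw [cls_eq_nine]
      cases w <;>
        simp only [Bool.cond_true, Bool.cond_false] <;>
        refine ⟨eb_ne_zero _ hc, eb_ne_zero _ (by omega), eb_ne_zero _ (by omega), ?_, ?_, ?_⟩ <;>
        rw [eb_natAbs, eb_natAbs] <;> omega
  · rintro ⟨x, y, z⟩ ⟨hsol, hcls⟩
    rw [cls_eq_nine] at hcls
    obtain ⟨hz, hx, hy, hxy, hxz, hyz⟩ := hcls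
    have heq : x.natAbs^2 + y.natAbs^2 + 2*z.natAbs^2 = k := nat_eq_of_int hsol
    rcases lt_or_gt_of_ne hxy with hlt | hlt
    · refine ⟨(decide (0 < x), decide (0 < y), decide (0 < z), true),
        (x.natAbs, y.natAbs, z.natAbs),
        ⟨show 0 < x.natAbs by omega, show 0 < z.natAbs by omega, hlt, hxz, hyz, heq⟩, ?_⟩
      simp only [Bool.cond_true]
      exact Prod.ext (eb_recover x hx) (Prod.ext (eb_recover y hy) (eb_recover z hz))
    · refine ⟨(decide (0 < x), decide (0 < y), decide (0 < z), false),
        (y.natAbs, x.natAbs, z.natAbs),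
        ⟨show 0 < y.natAbs by omega, show 0 < z.natAbs by omega, hlt, hyz, hxz,
          show y.natAbs^2 + x.natAbs^2 + 2*z.natAbs^2 = k by
            rw [add_comm (y.natAbs^2) (x.natAbs^2)]; exact heq⟩, ?_⟩
      simp only [Bool.cond_false]
      exact Prod.ext (eb_recover x hx) (Prod.ext (eb_recover y hy) (eb_recover z hz))
  · rintro ⟨s, t, u, w⟩ ⟨a, b, c⟩ ⟨s', t', u', w'⟩ ⟨a', b', c'⟩
      ⟨ha, hc, hab, hac, hbc, heq⟩ ⟨ha', hc', hab', hac', hbc', heq'⟩ h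
    dsimp only at ha hc hab hac hbc heq ha' hc' hab' hac' hbc' heq'
    have hb : 0 < b := lt_trans ha hab
    have hb' : 0 < b' := lt_trans ha' hab'
    dsimp only at h
    rw [Prod.ext_iff, Prod.ext_iff] at h
    obtain ⟨h1, h2, h3⟩ := h
    dsimp only at h1 h2 h3
    have hu := eb_inj hc hc' h3
    cases w <;> cases w' <;> simp only [Bool.cond_true, Bool.cond_false] at h1 h2
    · have e1 := eb_inj hb hb' h1
      have e2 := eb_inj ha ha' h2
      refine ⟨by simp [Prod.ext_iff, e1.1, e2.1, hu.1], by simp [Prod.ext_iff, e1.2, e2.2, hu.2]⟩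
    · obtain ⟨-, e1⟩ := eb_inj hb ha' h1
      obtain ⟨-, e2⟩ := eb_inj ha hb' h2
      omega
    · obtain ⟨-, e1⟩ := eb_inj ha hb' h1
      obtain ⟨-, e2⟩ := eb_inj hb ha' h2
      omega
    · have e1 := eb_inj ha ha' h1
      have e2 := eb_inj hb hb' h2
      refine ⟨by simp [Prod.ext_iff, e1.1, e2.1, hu.1], by simp [Prod.ext_iff, e1.2, e2.2, hu.2]⟩

lemma count2 (k : ℕ) : (fib k 2).ncard = 8 * (P2 k).ncard := by
  have h := count_lemma
    (fun (s : Bool × Bool × Bool) (a : ℕ × ℕ) =>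
      ((eb s.1 * (cond s.2.2 a.1 a.2 : ℕ), eb s.2.1 * (cond s.2.2 a.2 a.1 : ℕ), 0) : ℤ × ℤ × ℤ))
    (P2 k) (fib k 2) ?_ ?_ ?_
  · rw [h]; norm_num
  · rintro ⟨s, t, w⟩ ⟨a, b⟩ ⟨ha, hab, heq⟩
    dsimp only at ha hab heq ⊢
    have hb : 0 < b := lt_trans ha hab
    constructor
    · show _ = (k:ℤ)
      have : ((a:ℤ))^2 + ((b:ℤ))^2 = (k:ℤ) := by exact_mod_cast heq
      cases w <;>
        simp only [Bool.cond_true, Bool.cond_false, eb_mul_sq] <;>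
        · push_cast at this ⊢; linarith
    · show cls _ = 2
      rw [cls_eq_two]
      cases w <;>
        simp only [Bool.cond_true, Bool.cond_false] <;>
        refine ⟨trivial, eb_ne_zero _ (by omega), eb_ne_zero _ (by omega), ?_⟩ <;>
        rw [eb_natAbs, eb_natAbs] <;> omega
  · rintro ⟨x, y, z⟩ ⟨hsol, hcls⟩
    rw [cls_eq_two] at hcls
    obtain ⟨hz, hx, hy, hxy⟩ := hcls
    subst hz
    have heq : x.natAbs^2 + y.natAbs^2 + 2*Int.natAbs 0^2 = k := nat_eq_of_int hsol
    simp only [Int.natAbs_zero] at heq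
    rcases lt_or_gt_of_ne hxy with hlt | hlt
    · refine ⟨(decide (0 < x), decide (0 < y), true), (x.natAbs, y.natAbs),
        ⟨show 0 < x.natAbs by omega, hlt, show x.natAbs^2 + y.natAbs^2 = k by omega⟩, ?_⟩
      simp only [Bool.cond_true]
      exact Prod.ext (eb_recover x hx) (Prod.ext (eb_recover y hy) rfl)
    · refine ⟨(decide (0 < x), decide (0 < y), false), (y.natAbs, x.natAbs),
        ⟨show 0 < y.natAbs by omega, hlt, show y.natAbs^2 + x.natAbs^2 = k by
          rw [add_comm]; omega⟩, ?_⟩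
      simp only [Bool.cond_false]
      exact Prod.ext (eb_recover x hx) (Prod.ext (eb_recover y hy) rfl)
  · rintro ⟨s, t, w⟩ ⟨a, b⟩ ⟨s', t', w'⟩ ⟨a', b'⟩ ⟨ha, hab, heq⟩ ⟨ha', hab', heq'⟩ h
    dsimp only at ha hab heq ha' hab' heq'
    have hb : 0 < b := lt_trans ha hab
    have hb' : 0 < b' := lt_trans ha' hab'
    dsimp only at h
    rw [Prod.ext_iff, Prod.ext_iff] at h
    obtain ⟨h1, h2, -⟩ := h
    dsimp only at h1 h2
    cases w <;> cases w' <;> simp only [Bool.cond_true, Bool.cond_false] at h1 h2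
    · have e1 := eb_inj hb hb' h1
      have e2 := eb_inj ha ha' h2
      refine ⟨by simp [Prod.ext_iff, e1.1, e2.1], by simp [Prod.ext_iff, e1.2, e2.2]⟩
    · obtain ⟨-, e1⟩ := eb_inj hb ha' h1
      obtain ⟨-, e2⟩ := eb_inj ha hb' h2
      omega
    · obtain ⟨-, e1⟩ := eb_inj ha hb' h1
      obtain ⟨-, e2⟩ := eb_inj hb ha' h2
      omega
    · have e1 := eb_inj ha ha' h1
      have e2 := eb_inj hb hb' h2
      refine ⟨by simp [Prod.ext_iff, e1.1, e2.1], by simp [Prod.ext_iff, e1.2, e2.2]⟩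

lemma count5 (k : ℕ) : (fib k 5).ncard = 8 * (P12 k).ncard := by
  have h := count_lemma
    (fun (s : Bool × Bool × Bool) (a : ℕ × ℕ) =>
      cond s.2.2 ((eb s.1 * (a.1:ℕ), 0, eb s.2.1 * (a.2:ℕ)) : ℤ × ℤ × ℤ)
        ((0, eb s.1 * (a.1:ℕ), eb s.2.1 * (a.2:ℕ)) : ℤ × ℤ × ℤ))
    (P12 k) (fib k 5) ?_ ?_ ?_
  · rw [h]; norm_num
  · rintro ⟨s, t, w⟩ ⟨a, b⟩ ⟨ha, hb, hab, heq⟩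
    dsimp only at ha hb hab heq ⊢
    constructor
    · show _ ∈ sol k
      have : ((a:ℤ))^2 + 2*((b:ℤ))^2 = (k:ℤ) := by exact_mod_cast heq
      cases w <;>
        · show _ = (k:ℤ)
          simp only [Bool.cond_true, Bool.cond_false, eb_mul_sq]
          push_cast at this ⊢; linarith
    · show cls _ = 5
      cases w <;> simp only [Bool.cond_true, Bool.cond_false] <;> rw [cls_eq_five]
      · exact ⟨eb_ne_zero _ hb, Or.inl ⟨rfl, eb_ne_zero _ ha,
          by rw [eb_natAbs, eb_natAbs]; omega⟩⟩
      · exact ⟨eb_ne_zero _ hb, Or.inr ⟨rfl, eb_ne_zero _ ha,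
          by rw [eb_natAbs, eb_natAbs]; omega⟩⟩
  · rintro ⟨x, y, z⟩ ⟨hsol, hcls⟩
    rw [cls_eq_five] at hcls
    have heq := nat_eq_of_int hsol
    obtain ⟨hz, hor⟩ := hcls
    rcases hor with ⟨hx0, hy, hyz⟩ | ⟨hy0, hx, hxz⟩
    · subst hx0
      refine ⟨(decide (0 < y), decide (0 < z), false), (y.natAbs, z.natAbs),
        ⟨show 0 < y.natAbs by omega, show 0 < z.natAbs by omega, hyz,
          show y.natAbs^2 + 2*z.natAbs^2 = k by simp at heq; omega⟩, ?_⟩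
      simp only [Bool.cond_false]
      exact Prod.ext rfl (Prod.ext (eb_recover y hy) (eb_recover z hz))
    · subst hy0
      refine ⟨(decide (0 < x), decide (0 < z), true), (x.natAbs, z.natAbs),
        ⟨show 0 < x.natAbs by omega, show 0 < z.natAbs by omega, hxz,
          show x.natAbs^2 + 2*z.natAbs^2 = k by simp at heq; omega⟩, ?_⟩
      simp only [Bool.cond_true]
      exact Prod.ext (eb_recover x hx) (Prod.ext rfl (eb_recover z hz))
  · rintro ⟨s, t, w⟩ ⟨a, b⟩ ⟨s', t', w'⟩ ⟨a', b'⟩ ⟨ha, hb, hab, heq⟩ ⟨ha', hb', hab', heq'⟩ h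
    dsimp only at ha hb hab heq ha' hb' hab' heq'
    dsimp only at h
    cases w <;> cases w' <;> simp only [Bool.cond_true, Bool.cond_false] at h <;>
      rw [Prod.ext_iff, Prod.ext_iff] at h <;> obtain ⟨h1, h2, h3⟩ := h <;> dsimp only at h1 h2 h3
    · have e1 := eb_inj ha ha' h2
      have e3 := eb_inj hb hb' h3
      refine ⟨by simp [Prod.ext_iff, e1.1, e3.1], by simp [Prod.ext_iff, e1.2, e3.2]⟩
    · exact absurd h2 (eb_ne_zero _ ha)
    · exact absurd h1 (eb_ne_zero _ ha)
    · have e1 := eb_inj ha ha' h1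
      have e3 := eb_inj hb hb' h3
      refine ⟨by simp [Prod.ext_iff, e1.1, e3.1], by simp [Prod.ext_iff, e1.2, e3.2]⟩

end Counts

section Counts2

open Set

lemma count8 (k : ℕ) : (fib k 8).ncard = 16 * (P13 k).ncard := by
  have h := count_lemma
    (fun (s : Bool × Bool × Bool × Bool) (a : ℕ × ℕ) =>
      cond s.2.2.2 ((eb s.1 * (a.1:ℕ), eb s.2.1 * (a.2:ℕ), eb s.2.2.1 * (a.2:ℕ)) : ℤ × ℤ × ℤ)
        ((eb s.1 * (a.2:ℕ), eb s.2.1 * (a.1:ℕ), eb s.2.2.1 * (a.2:ℕ)) : ℤ × ℤ × ℤ))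
    (P13 k) (fib k 8) ?_ ?_ ?_
  · rw [h]; norm_num
  · rintro ⟨s, t, u, w⟩ ⟨a, b⟩ ⟨ha, hb, hab, heq⟩
    dsimp only at ha hb hab heq ⊢
    have heqz : ((a:ℤ))^2 + 3*((b:ℤ))^2 = (k:ℤ) := by exact_mod_cast heq
    constructor
    · show _ ∈ sol k
      cases w <;>
        · show _ = (k:ℤ)
          simp only [Bool.cond_true, Bool.cond_false, eb_mul_sq]
          push_cast at heqz ⊢; linarith
    · show cls _ = 8
      cases w <;> simp only [Bool.cond_true, Bool.cond_false] <;> rw [cls_eq_eight]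
      · refine ⟨eb_ne_zero _ hb, eb_ne_zero _ hb, eb_ne_zero _ ha, ?_, ?_⟩ <;>
          simp only [eb_natAbs]
        · omega
        · left; trivial
      · refine ⟨eb_ne_zero _ hb, eb_ne_zero _ ha, eb_ne_zero _ hb, ?_, ?_⟩ <;>
          simp only [eb_natAbs]
        · omega
        · right; trivial
  · rintro ⟨x, y, z⟩ ⟨hsol, hcls⟩
    rw [cls_eq_eight] at hcls
    have heq := nat_eq_of_int hsol
    obtain ⟨hz, hx, hy, hxy, hor⟩ := hcls
    rcases hor with hxz | hyz
    · -- |x| = |z| : w = false, a = |y|, b = |x|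
      refine ⟨(decide (0 < x), decide (0 < y), decide (0 < z), false), (y.natAbs, x.natAbs),
        ⟨show 0 < y.natAbs by omega, show 0 < x.natAbs by omega, fun hc => hxy hc.symm,
          show y.natAbs^2 + 3*x.natAbs^2 = k by
            rw [← hxz] at heq; nlinarith [heq]⟩, ?_⟩
      simp only [Bool.cond_false]
      refine Prod.ext (eb_recover x hx) (Prod.ext (eb_recover y hy) ?_)
      show eb _ * (x.natAbs : ℤ) = z
      rw [hxz]; exact eb_recover z hz
    · -- |y| = |z| : w = true, a = |x|, b = |y|
      refine ⟨(decide (0 < x), decide (0 < y), decide (0 < z), true), (x.natAbs, y.natAbs),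
        ⟨show 0 < x.natAbs by omega, show 0 < y.natAbs by omega, hxy,
          show x.natAbs^2 + 3*y.natAbs^2 = k by
            rw [← hyz] at heq; nlinarith [heq]⟩, ?_⟩
      simp only [Bool.cond_true]
      refine Prod.ext (eb_recover x hx) (Prod.ext (eb_recover y hy) ?_)
      show eb _ * (y.natAbs : ℤ) = z
      rw [hyz]; exact eb_recover z hz
  · rintro ⟨s, t, u, w⟩ ⟨a, b⟩ ⟨s', t', u', w'⟩ ⟨a', b'⟩
      ⟨ha, hb, hab, heq⟩ ⟨ha', hb', hab', heq'⟩ h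
    dsimp only at ha hb hab heq ha' hb' hab' heq'
    dsimp only at h
    cases w <;> cases w' <;> simp only [Bool.cond_true, Bool.cond_false] at h <;>
      rw [Prod.ext_iff, Prod.ext_iff] at h <;> obtain ⟨h1, h2, h3⟩ := h <;> dsimp only at h1 h2 h3
    · -- (false, false)
      have e1 := eb_inj hb hb' h1
      have e2 := eb_inj ha ha' h2
      have e3 := eb_inj hb hb' h3
      refine ⟨by simp [Prod.ext_iff, e1.1, e2.1, e3.1], by simp [Prod.ext_iff, e1.2, e2.2]⟩
    · -- (false, true)  LHS (b, a, b), RHS (a', b', b')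
      obtain ⟨-, e1⟩ := eb_inj hb ha' h1
      obtain ⟨-, e2⟩ := eb_inj ha hb' h2
      obtain ⟨-, e3⟩ := eb_inj hb hb' h3
      omega
    · -- (true, false)
      obtain ⟨-, e1⟩ := eb_inj ha hb' h1
      obtain ⟨-, e2⟩ := eb_inj hb ha' h2
      obtain ⟨-, e3⟩ := eb_inj hb hb' h3
      omega
    · have e1 := eb_inj ha ha' h1
      have e2 := eb_inj hb hb' h2
      have e3 := eb_inj hb hb' h3
      refine ⟨by simp [Prod.ext_iff, e1.1, e2.1, e3.1], by simp [Prod.ext_iff, e1.2, e2.2]⟩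

lemma count7_even (k : ℕ) (hk : k % 2 = 0) : (fib k 7).ncard = 16 * (P2 (k/2)).ncard := by
  have h := count_lemma
    (fun (s : Bool × Bool × Bool × Bool) (a : ℕ × ℕ) =>
      cond s.2.2.2 ((eb s.1 * (a.1:ℕ), eb s.2.1 * (a.1:ℕ), eb s.2.2.1 * (a.2:ℕ)) : ℤ × ℤ × ℤ)
        ((eb s.1 * (a.2:ℕ), eb s.2.1 * (a.2:ℕ), eb s.2.2.1 * (a.1:ℕ)) : ℤ × ℤ × ℤ))
    (P2 (k/2)) (fib k 7) ?_ ?_ ?_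
  · rw [h]; norm_num
  · rintro ⟨s, t, u, w⟩ ⟨a, b⟩ ⟨ha, hab, heq⟩
    dsimp only at ha hab heq ⊢
    have hb : 0 < b := lt_trans ha hab
    have hknat : a^2 + a^2 + 2*b^2 = k := by
      have h2 : 2*(a^2+b^2) = k := by
        generalize a^2+b^2 = n at heq ⊢
        omega
      omega
    have hknat' : b^2 + b^2 + 2*a^2 = k := by omega
    constructor
    · show _ ∈ sol k
      cases w <;>
        · show _ = (k:ℤ)
          simp only [Bool.cond_true, Bool.cond_false, eb_mul_sq]
          have := int_eq_of_nat hknat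
          have := int_eq_of_nat hknat'
          push_cast at this ⊢ <;> linarith
    · show cls _ = 7
      cases w <;> simp only [Bool.cond_true, Bool.cond_false] <;> rw [cls_eq_seven]
      · refine ⟨eb_ne_zero _ ha, eb_ne_zero _ hb, eb_ne_zero _ hb, ?_, ?_⟩ <;>
          simp only [eb_natAbs] <;> omega
      · refine ⟨eb_ne_zero _ hb, eb_ne_zero _ ha, eb_ne_zero _ ha, ?_, ?_⟩ <;>
          simp only [eb_natAbs] <;> omega
  · rintro ⟨x, y, z⟩ ⟨hsol, hcls⟩
    rw [cls_eq_seven] at hcls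
    have heq := nat_eq_of_int hsol
    obtain ⟨hz, hx, hy, hxy, hxz⟩ := hcls
    have hhalf : x.natAbs^2 + z.natAbs^2 = k/2 := by
      rw [← hxy] at heq
      generalize hx2 : x.natAbs^2 = A at *
      generalize hz2 : z.natAbs^2 = B at *
      omega
    rcases lt_or_gt_of_ne (show x.natAbs ≠ z.natAbs from hxz) with hlt | hlt
    · refine ⟨(decide (0 < x), decide (0 < y), decide (0 < z), true), (x.natAbs, z.natAbs),
        ⟨show 0 < x.natAbs by omega, hlt, hhalf⟩, ?_⟩
      simp only [Bool.cond_true]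
      refine Prod.ext (eb_recover x hx) (Prod.ext ?_ (eb_recover z hz))
      show eb _ * (x.natAbs : ℤ) = y
      rw [hxy]; exact eb_recover y hy
    · refine ⟨(decide (0 < x), decide (0 < y), decide (0 < z), false), (z.natAbs, x.natAbs),
        ⟨show 0 < z.natAbs by omega, hlt, by rw [add_comm]; exact hhalf⟩, ?_⟩
      simp only [Bool.cond_false]
      refine Prod.ext (eb_recover x hx) (Prod.ext ?_ (eb_recover z hz))
      show eb _ * (x.natAbs : ℤ) = y
      rw [hxy]; exact eb_recover y hy
  · rintro ⟨s, t, u, w⟩ ⟨a, b⟩ ⟨s', t', u', w'⟩ ⟨a', b'⟩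
      ⟨ha, hab, heq⟩ ⟨ha', hab', heq'⟩ h
    dsimp only at ha hab heq ha' hab' heq'
    have hb : 0 < b := lt_trans ha hab
    have hb' : 0 < b' := lt_trans ha' hab'
    dsimp only at h
    cases w <;> cases w' <;> simp only [Bool.cond_true, Bool.cond_false] at h <;>
      rw [Prod.ext_iff, Prod.ext_iff] at h <;> obtain ⟨h1, h2, h3⟩ := h <;> dsimp only at h1 h2 h3
    · have e1 := eb_inj hb hb' h1
      have e2 := eb_inj hb hb' h2
      have e3 := eb_inj ha ha' h3
      refine ⟨by simp [Prod.ext_iff, e1.1, e2.1, e3.1], by simp [Prod.ext_iff, e1.2, e3.2]⟩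
    · obtain ⟨-, e1⟩ := eb_inj hb ha' h1
      obtain ⟨-, e3⟩ := eb_inj ha hb' h3
      omega
    · obtain ⟨-, e1⟩ := eb_inj ha hb' h1
      obtain ⟨-, e3⟩ := eb_inj hb ha' h3
      omega
    · have e1 := eb_inj ha ha' h1
      have e2 := eb_inj ha ha' h2
      have e3 := eb_inj hb hb' h3
      refine ⟨by simp [Prod.ext_iff, e1.1, e2.1, e3.1], by simp [Prod.ext_iff, e1.2, e3.2]⟩

lemma count7_odd (k : ℕ) (hk : k % 2 = 1) : fib k 7 = ∅ := by
  ext ⟨x, y, z⟩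
  simp only [fib, Set.mem_setOf_eq, Set.mem_empty_iff_false, iff_false, not_and]
  intro hsol hcls
  rw [cls_eq_seven] at hcls
  obtain ⟨hz, hx, hy, hxy, hxz⟩ := hcls
  have heq := nat_eq_of_int hsol
  rw [← hxy] at heq
  generalize x.natAbs^2 = A at heq
  generalize z.natAbs^2 = B at heq
  omega

lemma count7 (k : ℕ) : (fib k 7).ncard = 16 * L2half k := by
  rcases Nat.mod_two_eq_zero_or_one k with hk | hk
  · rw [count7_even k hk]
    unfold L2half
    rw [if_pos hk, L2_eq]
  · rw [count7_odd k hk]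
    unfold L2half
    rw [if_neg (by omega)]
    simp

end Counts2

section Special

open Set

lemma fib0_mem {k : ℕ} {x y z : ℤ} (h : (x,y,z) ∈ fib k 0) :
    z = 0 ∧ ((x = 0 ∧ y.natAbs^2 = k) ∨ (y = 0 ∧ x.natAbs^2 = k)) := by
  obtain ⟨hsol, hcls⟩ := h
  rw [cls_eq_zero] at hcls
  obtain ⟨hz, hor⟩ := hcls
  have heq := nat_eq_of_int hsol
  subst hz
  simp only [Int.natAbs_zero] at heq
  rcases hor with h0 | h0 <;> subst h0 <;> simp only [Int.natAbs_zero] at heq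
  · exact ⟨rfl, Or.inl ⟨rfl, by omega⟩⟩
  · exact ⟨rfl, Or.inr ⟨rfl, by omega⟩⟩

lemma fib1_mem {k : ℕ} {x y z : ℤ} (h : (x,y,z) ∈ fib k 1) :
    z = 0 ∧ x ≠ 0 ∧ x.natAbs = y.natAbs ∧ 2 * x.natAbs^2 = k := by
  obtain ⟨hsol, hcls⟩ := h
  rw [cls_eq_one] at hcls
  obtain ⟨hz, hx, hy, hxy⟩ := hcls
  have heq := nat_eq_of_int hsol
  subst hz
  simp only [Int.natAbs_zero] at heq
  rw [← hxy] at heq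
  exact ⟨rfl, hx, hxy, by omega⟩

lemma fib3_mem {k : ℕ} {x y z : ℤ} (h : (x,y,z) ∈ fib k 3) :
    x = 0 ∧ y = 0 ∧ z ≠ 0 ∧ 2 * z.natAbs^2 = k := by
  obtain ⟨hsol, hcls⟩ := h
  rw [cls_eq_three] at hcls
  obtain ⟨hz, hx, hy⟩ := hcls
  have heq := nat_eq_of_int hsol
  subst hx; subst hy
  simp only [Int.natAbs_zero] at heq
  exact ⟨rfl, rfl, hz, by omega⟩

lemma fib4_mem {k : ℕ} {x y z : ℤ} (h : (x,y,z) ∈ fib k 4) :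
    z ≠ 0 ∧ 3 * z.natAbs^2 = k ∧
      ((x = 0 ∧ y.natAbs = z.natAbs ∧ y ≠ 0) ∨ (y = 0 ∧ x.natAbs = z.natAbs ∧ x ≠ 0)) := by
  obtain ⟨hsol, hcls⟩ := h
  rw [cls_eq_four] at hcls
  obtain ⟨hz, hor⟩ := hcls
  have heq := nat_eq_of_int hsol
  rcases hor with ⟨h0, hy, hyz⟩ | ⟨h0, hx, hxz⟩ <;> subst h0 <;>
    simp only [Int.natAbs_zero] at heq
  · rw [hyz] at heq
    exact ⟨hz, by omega, Or.inl ⟨rfl, hyz, hy⟩⟩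
  · rw [hxz] at heq
    exact ⟨hz, by omega, Or.inr ⟨rfl, hxz, hx⟩⟩

lemma fib6_mem {k : ℕ} {x y z : ℤ} (h : (x,y,z) ∈ fib k 6) :
    z ≠ 0 ∧ x.natAbs = z.natAbs ∧ y.natAbs = z.natAbs ∧ 4 * z.natAbs^2 = k := by
  obtain ⟨hsol, hcls⟩ := h
  rw [cls_eq_six] at hcls
  obtain ⟨hz, hx, hy, hxy, hxz⟩ := hcls
  have heq := nat_eq_of_int hsol
  dsimp only at heq
  rw [← hxy, hxz] at heq
  exact ⟨hz, hxz, by rw [← hxy]; exact hxz, by omega⟩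

lemma fib0_empty {k : ℕ} (h : ∀ a : ℕ, a^2 ≠ k) : fib k 0 = ∅ := by
  ext ⟨x, y, z⟩
  simp only [Set.mem_empty_iff_false, iff_false]
  intro hmem
  rcases (fib0_mem hmem).2 with ⟨-, h2⟩ | ⟨-, h2⟩ <;> exact h _ h2

lemma fib1_empty {k : ℕ} (h : ∀ a : ℕ, 0 < a → 2 * a^2 ≠ k) : fib k 1 = ∅ := by
  ext ⟨x, y, z⟩
  simp only [Set.mem_empty_iff_false, iff_false]
  intro hmem
  obtain ⟨-, hx, -, h2⟩ := fib1_mem hmem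
  exact h _ (by omega) h2

lemma fib3_empty {k : ℕ} (h : ∀ a : ℕ, 0 < a → 2 * a^2 ≠ k) : fib k 3 = ∅ := by
  ext ⟨x, y, z⟩
  simp only [Set.mem_empty_iff_false, iff_false]
  intro hmem
  obtain ⟨-, -, hz, h2⟩ := fib3_mem hmem
  exact h _ (by omega) h2

lemma fib4_empty {k : ℕ} (h : ∀ a : ℕ, 0 < a → 3 * a^2 ≠ k) : fib k 4 = ∅ := by
  ext ⟨x, y, z⟩
  simp only [Set.mem_empty_iff_false, iff_false]
  intro hmem
  obtain ⟨hz, h2, -⟩ := fib4_mem hmem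
  exact h _ (by omega) h2

lemma fib6_empty {k : ℕ} (h : ∀ a : ℕ, 0 < a → 4 * a^2 ≠ k) : fib k 6 = ∅ := by
  ext ⟨x, y, z⟩
  simp only [Set.mem_empty_iff_false, iff_false]
  intro hmem
  obtain ⟨hz, -, -, h2⟩ := fib6_mem hmem
  exact h _ (by omega) h2

end Special

section Explicit

open Set

lemma fib0_card {k r : ℕ} (hr : 0 < r) (hk : r^2 = k) : (fib k 0).ncard = 4 := by
  have hset : fib k 0 = {((r:ℤ),0,0), (-(r:ℤ),0,0), (0,(r:ℤ),0), (0,-(r:ℤ),0)} := by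
    ext ⟨x,y,z⟩
    constructor
    · intro hmem
      obtain ⟨hz, hor⟩ := fib0_mem hmem
      subst hz
      rcases hor with ⟨hx0, hy2⟩ | ⟨hy0, hx2⟩
      · subst hx0
        have h1 : y.natAbs = r := nat_sq_inj (hy2.trans hk.symm)
        have h2 : y = r ∨ y = -(r:ℤ) := by omega
        rcases h2 with h|h <;> subst h <;> simp
      · subst hy0
        have h1 : x.natAbs = r := nat_sq_inj (hx2.trans hk.symm)
        have h2 : x = r ∨ x = -(r:ℤ) := by omega
        rcases h2 with h|h <;> subst h <;> simp
    · intro h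
      simp only [Set.mem_insert_iff, Set.mem_singleton_iff, Prod.mk.injEq] at h
      rcases h with ⟨rfl,rfl,rfl⟩|⟨rfl,rfl,rfl⟩|⟨rfl,rfl,rfl⟩|⟨rfl,rfl,rfl⟩ <;>
        exact ⟨by show _ = (k:ℤ); rw [← hk]; push_cast; ring,
          cls_eq_zero.mpr ⟨rfl, by tauto⟩⟩
  rw [hset,
      Set.ncard_insert_of_notMem (by
        simp only [Set.mem_insert_iff, Set.mem_singleton_iff, Prod.mk.injEq]; omega),
      Set.ncard_insert_of_notMem (by
        simp only [Set.mem_insert_iff, Set.mem_singleton_iff, Prod.mk.injEq]; omega),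
      Set.ncard_insert_of_notMem (by
        simp only [Set.mem_singleton_iff, Prod.mk.injEq]; omega),
      Set.ncard_singleton]

lemma fib1_card {k m : ℕ} (hm : 0 < m) (hk : 2*m^2 = k) : (fib k 1).ncard = 4 := by
  have hset : fib k 1 =
      {((m:ℤ),(m:ℤ),0), ((m:ℤ),-(m:ℤ),0), (-(m:ℤ),(m:ℤ),0), (-(m:ℤ),-(m:ℤ),0)} := by
    ext ⟨x,y,z⟩
    constructor
    · intro hmem
      obtain ⟨hz, hx, hxy, h2⟩ := fib1_mem hmem
      subst hz
      have h3 : x.natAbs ^ 2 = m ^ 2 := by linarith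
      have h4 : x.natAbs = m := nat_sq_inj h3
      have h5 : x = m ∨ x = -(m:ℤ) := by omega
      have h6 : y = m ∨ y = -(m:ℤ) := by omega
      rcases h5 with h|h <;> subst h <;> rcases h6 with h|h <;> subst h <;> simp
    · intro h
      simp only [Set.mem_insert_iff, Set.mem_singleton_iff, Prod.mk.injEq] at h
      rcases h with ⟨rfl,rfl,rfl⟩|⟨rfl,rfl,rfl⟩|⟨rfl,rfl,rfl⟩|⟨rfl,rfl,rfl⟩ <;>
        exact ⟨by show _ = (k:ℤ); rw [← hk]; push_cast; ring,
          cls_eq_one.mpr ⟨rfl, by omega, by omega, by omega⟩⟩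
  rw [hset,
      Set.ncard_insert_of_notMem (by
        simp only [Set.mem_insert_iff, Set.mem_singleton_iff, Prod.mk.injEq]; omega),
      Set.ncard_insert_of_notMem (by
        simp only [Set.mem_insert_iff, Set.mem_singleton_iff, Prod.mk.injEq]; omega),
      Set.ncard_insert_of_notMem (by
        simp only [Set.mem_singleton_iff, Prod.mk.injEq]; omega),
      Set.ncard_singleton]

lemma fib3_card {k m : ℕ} (hm : 0 < m) (hk : 2*m^2 = k) : (fib k 3).ncard = 2 := by
  have hset : fib k 3 = {((0:ℤ),(0:ℤ),(m:ℤ)), ((0:ℤ),(0:ℤ),-(m:ℤ))} := by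
    ext ⟨x,y,z⟩
    constructor
    · intro hmem
      obtain ⟨hx, hy, hz, h2⟩ := fib3_mem hmem
      subst hx; subst hy
      have h3 : z.natAbs ^ 2 = m ^ 2 := by linarith
      have h4 : z.natAbs = m := nat_sq_inj h3
      have h5 : z = m ∨ z = -(m:ℤ) := by omega
      rcases h5 with h|h <;> subst h <;> simp
    · intro h
      simp only [Set.mem_insert_iff, Set.mem_singleton_iff, Prod.mk.injEq] at h
      rcases h with ⟨rfl,rfl,rfl⟩|⟨rfl,rfl,rfl⟩ <;>
        exact ⟨by show _ = (k:ℤ); rw [← hk]; push_cast; ring,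
          cls_eq_three.mpr ⟨by omega, rfl, rfl⟩⟩
  rw [hset,
      Set.ncard_insert_of_notMem (by
        simp only [Set.mem_singleton_iff, Prod.mk.injEq]; omega),
      Set.ncard_singleton]

lemma fib4_card {k m : ℕ} (hm : 0 < m) (hk : 3*m^2 = k) : (fib k 4).ncard = 8 := by
  have hset : fib k 4 =
      {((0:ℤ),(m:ℤ),(m:ℤ)), ((0:ℤ),(m:ℤ),-(m:ℤ)), ((0:ℤ),-(m:ℤ),(m:ℤ)), ((0:ℤ),-(m:ℤ),-(m:ℤ)),
       ((m:ℤ),(0:ℤ),(m:ℤ)), ((m:ℤ),(0:ℤ),-(m:ℤ)), (-(m:ℤ),(0:ℤ),(m:ℤ)), (-(m:ℤ),(0:ℤ),-(m:ℤ))} := by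
    ext ⟨x,y,z⟩
    constructor
    · intro hmem
      obtain ⟨hz, h2, hor⟩ := fib4_mem hmem
      have h3 : z.natAbs ^ 2 = m ^ 2 := by linarith
      have h4 : z.natAbs = m := nat_sq_inj h3
      have h5 : z = m ∨ z = -(m:ℤ) := by omega
      rcases hor with ⟨hx0, hyz, -⟩ | ⟨hy0, hxz, -⟩
      · subst hx0
        have h6 : y = m ∨ y = -(m:ℤ) := by omega
        rcases h5 with h|h <;> subst h <;> rcases h6 with h|h <;> subst h <;> simp
      · subst hy0
        have h6 : x = m ∨ x = -(m:ℤ) := by omega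
        rcases h5 with h|h <;> subst h <;> rcases h6 with h|h <;> subst h <;> simp
    · intro h
      simp only [Set.mem_insert_iff, Set.mem_singleton_iff, Prod.mk.injEq] at h
      rcases h with ⟨rfl,rfl,rfl⟩|⟨rfl,rfl,rfl⟩|⟨rfl,rfl,rfl⟩|⟨rfl,rfl,rfl⟩|
        ⟨rfl,rfl,rfl⟩|⟨rfl,rfl,rfl⟩|⟨rfl,rfl,rfl⟩|⟨rfl,rfl,rfl⟩ <;>
        refine ⟨by show _ = (k:ℤ); rw [← hk]; push_cast; ring,
          cls_eq_four.mpr ⟨by omega, ?_⟩⟩ <;>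
        first
        | exact Or.inl ⟨rfl, by omega, by omega⟩
        | exact Or.inr ⟨rfl, by omega, by omega⟩
  rw [hset]
  rw [Set.ncard_insert_of_notMem (by
        simp only [Set.mem_insert_iff, Set.mem_singleton_iff, Prod.mk.injEq]; omega),
      Set.ncard_insert_of_notMem (by
        simp only [Set.mem_insert_iff, Set.mem_singleton_iff, Prod.mk.injEq]; omega),
      Set.ncard_insert_of_notMem (by
        simp only [Set.mem_insert_iff, Set.mem_singleton_iff, Prod.mk.injEq]; omega),
      Set.ncard_insert_of_notMem (by
        simp only [Set.mem_insert_iff, Set.mem_singleton_iff, Prod.mk.injEq]; omega),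
      Set.ncard_insert_of_notMem (by
        simp only [Set.mem_insert_iff, Set.mem_singleton_iff, Prod.mk.injEq]; omega),
      Set.ncard_insert_of_notMem (by
        simp only [Set.mem_insert_iff, Set.mem_singleton_iff, Prod.mk.injEq]; omega),
      Set.ncard_insert_of_notMem (by
        simp only [Set.mem_singleton_iff, Prod.mk.injEq]; omega),
      Set.ncard_singleton]

lemma fib6_card {k m : ℕ} (hm : 0 < m) (hk : 4*m^2 = k) : (fib k 6).ncard = 8 := by
  have hset : fib k 6 =
      {((m:ℤ),(m:ℤ),(m:ℤ)), ((m:ℤ),(m:ℤ),-(m:ℤ)), ((m:ℤ),-(m:ℤ),(m:ℤ)), ((m:ℤ),-(m:ℤ),-(m:ℤ)),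
       (-(m:ℤ),(m:ℤ),(m:ℤ)), (-(m:ℤ),(m:ℤ),-(m:ℤ)), (-(m:ℤ),-(m:ℤ),(m:ℤ)),
       (-(m:ℤ),-(m:ℤ),-(m:ℤ))} := by
    ext ⟨x,y,z⟩
    constructor
    · intro hmem
      obtain ⟨hz, hxz, hyz, h2⟩ := fib6_mem hmem
      have h3 : z.natAbs ^ 2 = m ^ 2 := by linarith
      have h4 : z.natAbs = m := nat_sq_inj h3
      have h5 : z = m ∨ z = -(m:ℤ) := by omega
      have h6 : x = m ∨ x = -(m:ℤ) := by omega
      have h7 : y = m ∨ y = -(m:ℤ) := by omega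
      rcases h5 with h|h <;> subst h <;> rcases h6 with h|h <;> subst h <;>
        rcases h7 with h|h <;> subst h <;> simp
    · intro h
      simp only [Set.mem_insert_iff, Set.mem_singleton_iff, Prod.mk.injEq] at h
      rcases h with ⟨rfl,rfl,rfl⟩|⟨rfl,rfl,rfl⟩|⟨rfl,rfl,rfl⟩|⟨rfl,rfl,rfl⟩|
        ⟨rfl,rfl,rfl⟩|⟨rfl,rfl,rfl⟩|⟨rfl,rfl,rfl⟩|⟨rfl,rfl,rfl⟩ <;>
        exact ⟨by show _ = (k:ℤ); rw [← hk]; push_cast; ring,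
          cls_eq_six.mpr ⟨by omega, by omega, by omega, by omega, by omega⟩⟩
  rw [hset]
  rw [Set.ncard_insert_of_notMem (by
        simp only [Set.mem_insert_iff, Set.mem_singleton_iff, Prod.mk.injEq]; omega),
      Set.ncard_insert_of_notMem (by
        simp only [Set.mem_insert_iff, Set.mem_singleton_iff, Prod.mk.injEq]; omega),
      Set.ncard_insert_of_notMem (by
        simp only [Set.mem_insert_iff, Set.mem_singleton_iff, Prod.mk.injEq]; omega),
      Set.ncard_insert_of_notMem (by
        simp only [Set.mem_insert_iff, Set.mem_singleton_iff, Prod.mk.injEq]; omega),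
      Set.ncard_insert_of_notMem (by
        simp only [Set.mem_insert_iff, Set.mem_singleton_iff, Prod.mk.injEq]; omega),
      Set.ncard_insert_of_notMem (by
        simp only [Set.mem_insert_iff, Set.mem_singleton_iff, Prod.mk.injEq]; omega),
      Set.ncard_insert_of_notMem (by
        simp only [Set.mem_singleton_iff, Prod.mk.injEq]; omega),
      Set.ncard_singleton]

end Explicit

section Main

open Set

lemma sum_fin10 (g : Fin 10 → ℕ) : ∑ i : Fin 10, g i =
    g 0 + g 1 + g 2 + g 3 + g 4 + g 5 + g 6 + g 7 + g 8 + g 9 := by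
  rw [Fin.sum_univ_castSucc, Fin.sum_univ_castSucc, Fin.sum_univ_eight]
  rfl

lemma master (k : ℕ) (e0 e1 e3 e4 e6 : ℕ)
    (h0 : (fib k 0).ncard = e0) (h1 : (fib k 1).ncard = e1) (h3 : (fib k 3).ncard = e3)
    (h4 : (fib k 4).ncard = e4) (h6 : (fib k 6).ncard = e6) :
    N112 k = 16 * L112 k + 8 * L2 k + 8 * L12 k + 16 * L13 k + 16 * L2half k +
      (e0 + e1 + e3 + e4 + e6) := by
  rw [N112_eq, N112_eq_sum, sum_fin10]
  rw [h0, h1, h3, h4, h6, count2, count5, count7, count8, count9]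
  rw [L112_eq, L2_eq, L12_eq, L13_eq]
  ring

end Main

theorem stmt9 (k : ℕ) (hk : 0 < k) :
    ((∃ m : ℕ, 0 < m ∧ Odd m ∧ k = m ^ 2) → (16 * L112 k : ℤ) = C k - 4) ∧
    ((∃ m : ℕ, 0 < m ∧ k = 2 * m ^ 2) → (16 * L112 k : ℤ) = C k - 6) ∧
    ((∃ m : ℕ, 0 < m ∧ k = 3 * m ^ 2) → (16 * L112 k : ℤ) = C k - 8) ∧
    ((∃ m : ℕ, 0 < m ∧ k = 4 * m ^ 2) → (16 * L112 k : ℤ) = C k - 12) := by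
  refine ⟨?_, ?_, ?_, ?_⟩
  · rintro ⟨m, hm, hodd, rfl⟩
    have hoddm := Nat.odd_iff.mp hodd
    have key := master (m^2) 4 0 0 0 0
      (fib0_card hm rfl)
      (by rw [fib1_empty ?_]
          · exact Set.ncard_empty _
          · intro a ha he
            have h2 : 1*m^2 = 2*a^2 := by linarith
            have := sq_aux Nat.prime_two (by norm_num) one_pos h2
            omega)
      (by rw [fib3_empty ?_]
          · exact Set.ncard_empty _
          · intro a ha he
            have h2 : 1*m^2 = 2*a^2 := by linarith
            have := sq_aux Nat.prime_two (by norm_num) one_pos h2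
            omega)
      (by rw [fib4_empty ?_]
          · exact Set.ncard_empty _
          · intro a ha he
            have h2 : 1*m^2 = 3*a^2 := by linarith
            have := sq_aux Nat.prime_three (by norm_num) one_pos h2
            omega)
      (by rw [fib6_empty ?_]
          · exact Set.ncard_empty _
          · intro a ha he
            have h2 : (2*a)^2 = m^2 := by
              rw [show (2*a)^2 = 4*a^2 from by ring]; exact he
            have := nat_sq_inj h2
            omega)
    unfold C
    push_cast [key]
    ring
  · rintro ⟨m, hm, rfl⟩
    have key := master (2*m^2) 0 4 2 0 0
      (by rw [fib0_empty ?_]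
          · exact Set.ncard_empty _
          · intro a he
            have h2 : 1*a^2 = 2*m^2 := by linarith
            have := sq_aux Nat.prime_two (by norm_num) one_pos h2
            omega)
      (fib1_card hm rfl)
      (fib3_card hm rfl)
      (by rw [fib4_empty ?_]
          · exact Set.ncard_empty _
          · intro a ha he
            have h2 : 2*m^2 = 3*a^2 := by linarith
            have := sq_aux Nat.prime_three (by norm_num) two_pos h2
            omega)
      (by rw [fib6_empty ?_]
          · exact Set.ncard_empty _
          · intro a ha he
            have h2 : 1*m^2 = 2*a^2 := by linarith
            have := sq_aux Nat.prime_two (by norm_num) one_pos h2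
            omega)
    unfold C
    push_cast [key]
    ring
  · rintro ⟨m, hm, rfl⟩
    have key := master (3*m^2) 0 0 0 8 0
      (by rw [fib0_empty ?_]
          · exact Set.ncard_empty _
          · intro a he
            have h2 : 1*a^2 = 3*m^2 := by linarith
            have := sq_aux Nat.prime_three (by norm_num) one_pos h2
            omega)
      (by rw [fib1_empty ?_]
          · exact Set.ncard_empty _
          · intro a ha he
            have h2 : 2*a^2 = 3*m^2 := by linarith
            have := sq_aux Nat.prime_three (by norm_num) two_pos h2
            omega)
      (by rw [fib3_empty ?_]
          · exact Set.ncard_empty _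
          · intro a ha he
            have h2 : 2*a^2 = 3*m^2 := by linarith
            have := sq_aux Nat.prime_three (by norm_num) two_pos h2
            omega)
      (fib4_card hm rfl)
      (by rw [fib6_empty ?_]
          · exact Set.ncard_empty _
          · intro a ha he
            have h2 : 1*(2*a)^2 = 3*m^2 := by
              rw [show 1*(2*a)^2 = 4*a^2 from by ring]; exact he
            have := sq_aux Nat.prime_three (by norm_num) one_pos h2
            omega)
    unfold C
    push_cast [key]
    ring
  · rintro ⟨m, hm, rfl⟩
    have key := master (4*m^2) 4 0 0 0 8
      (by refine fib0_card (show 0 < 2*m by omega) ?_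
          rw [show (2*m)^2 = 4*m^2 from by ring])
      (by rw [fib1_empty ?_]
          · exact Set.ncard_empty _
          · intro a ha he
            have h2 : 1*a^2 = 2*m^2 := by linarith
            have := sq_aux Nat.prime_two (by norm_num) one_pos h2
            omega)
      (by rw [fib3_empty ?_]
          · exact Set.ncard_empty _
          · intro a ha he
            have h2 : 1*a^2 = 2*m^2 := by linarith
            have := sq_aux Nat.prime_two (by norm_num) one_pos h2
            omega)
      (by rw [fib4_empty ?_]
          · exact Set.ncard_empty _
          · intro a ha he
            have h2 : 4*m^2 = 3*a^2 := by linarith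
            have := sq_aux Nat.prime_three (by norm_num) four_pos h2
            omega)
      (fib6_card hm rfl)
    unfold C
    push_cast [key]
    ring
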